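/- Let d ≥ 1, k ≥ 2, C > 0, Δ̄ ∈ (0,1), let y_1,…,y_{k₀} ∈ ℝ^d, let (w_1,…,w_{k₀}) be a probability vector, and let B ⊆ ℝ^d be the Euclidean ball of radius (√(C ln k)+√d)/Δ̄ centered at 0. Then for every x ∈ ℝ^d, | Σ_{j=1}^{k₀} w_j γ_{Δ̄}(x − y_j) − (2π)^{-d} Σ_{j=1}^{k₀} w_j ∫_B e^{-Δ̄²‖z‖²/2} e^{i⟨x − y_j, z⟩} dz | ≤ (2π)^{-d} ∫_{ℝ^d ∖ B} e^{-Δ̄²‖z‖²/2} dz ≤ (2πΔ̄²)^{-d/2}·k^{-C/2}. -/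

import Mathlib

open MeasureTheory Real
open scoped RealInnerProductSpace

noncomputable def gaussDensity (d : ℕ) (σ : ℝ) (z : EuclideanSpace ℝ (Fin d)) : ℝ :=
  (2 * π * σ ^ 2) ^ (-(d : ℝ) / 2) * Real.exp (-‖z‖ ^ 2 / (2 * σ ^ 2))

section helpers
variable {d : ℕ} {Δ : ℝ}

lemma integrand_eq (Δ : ℝ) (u : EuclideanSpace ℝ (Fin d)) :
    (fun z : EuclideanSpace ℝ (Fin d) =>
        (Real.exp (-Δ ^ 2 * ‖z‖ ^ 2 / 2) : ℂ) * Complex.exp ((⟪u, z⟫ : ℝ) * Complex.I)) =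
      fun z : EuclideanSpace ℝ (Fin d) =>
        Complex.exp (-((Δ ^ 2 / 2 : ℝ) : ℂ) * ‖z‖ ^ 2 + Complex.I * (⟪u, z⟫ : ℝ)) := by
  funext z
  rw [Complex.ofReal_exp, ← Complex.exp_add]
  congr 1
  push_cast
  ring

lemma integrable_f (hΔ : 0 < Δ) (u : EuclideanSpace ℝ (Fin d)) :
    Integrable (fun z : EuclideanSpace ℝ (Fin d) =>
      (Real.exp (-Δ ^ 2 * ‖z‖ ^ 2 / 2) : ℂ) * Complex.exp ((⟪u, z⟫ : ℝ) * Complex.I)) := by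
  rw [integrand_eq]
  exact GaussianFourier.integrable_cexp_neg_mul_sq_norm_add (by rw [Complex.ofReal_re]; exact div_pos (pow_pos hΔ 2) two_pos) _ u

lemma norm_f (Δ : ℝ) (u : EuclideanSpace ℝ (Fin d)) (z : EuclideanSpace ℝ (Fin d)) :
    ‖(Real.exp (-Δ ^ 2 * ‖z‖ ^ 2 / 2) : ℂ) * Complex.exp ((⟪u, z⟫ : ℝ) * Complex.I)‖ =
      Real.exp (-Δ ^ 2 * ‖z‖ ^ 2 / 2) := by
  rw [norm_mul, Complex.norm_real, Complex.norm_exp_ofReal_mul_I, mul_one, Real.norm_eq_abs,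
    Real.abs_exp]

lemma integrable_g (hΔ : 0 < Δ) :
    Integrable (fun z : EuclideanSpace ℝ (Fin d) => Real.exp (-Δ ^ 2 * ‖z‖ ^ 2 / 2)) := by
  have h := (integrable_f (d := d) hΔ 0).norm
  exact h.congr (Filter.Eventually.of_forall fun z => norm_f Δ 0 z)

lemma const_eq (d : ℕ) {Δ : ℝ} (r : ℝ) (hΔ : 0 < Δ) :
    (2 * π * Δ ^ 2) ^ (-(d : ℝ) / 2) * rexp (-r ^ 2 / (2 * Δ ^ 2)) =
      (2 * π) ^ (-(d : ℝ)) * ((2 * π / Δ ^ 2) ^ ((d : ℝ) / 2) * rexp (-r ^ 2 / (2 * Δ ^ 2))) := by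
  have e1 : (2 * π * Δ ^ 2 : ℝ) ^ (-(d : ℝ) / 2) =
      (2 * π) ^ (-(d : ℝ) / 2) * (Δ ^ 2) ^ (-(d : ℝ) / 2) :=
    Real.mul_rpow (by positivity) (sq_nonneg Δ)
  have e2 : (2 * π / Δ ^ 2 : ℝ) ^ ((d : ℝ) / 2) =
      (2 * π) ^ ((d : ℝ) / 2) * (Δ ^ 2) ^ (-(d : ℝ) / 2) := by
    rw [Real.div_rpow (by positivity) (sq_nonneg Δ), show (-(d : ℝ) / 2) = -((d : ℝ) / 2) by ring,
      Real.rpow_neg (sq_nonneg Δ), div_eq_mul_inv]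
  have e3 : (2 * π : ℝ) ^ (-(d : ℝ)) * (2 * π) ^ ((d : ℝ) / 2) = (2 * π) ^ (-(d : ℝ) / 2) := by
    rw [← Real.rpow_add (by positivity)]
    ring_nf
  rw [e1, e2, ← e3]
  ring

lemma gauss_eq (hΔ : 0 < Δ) (u : EuclideanSpace ℝ (Fin d)) :
    ((gaussDensity d Δ u : ℝ) : ℂ) = (((2 * π) ^ (-(d : ℝ)) : ℝ) : ℂ) *
      ∫ z : EuclideanSpace ℝ (Fin d),
        (Real.exp (-Δ ^ 2 * ‖z‖ ^ 2 / 2) : ℂ) * Complex.exp ((⟪u, z⟫ : ℝ) * Complex.I) := by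
  have hb : (0:ℝ) < Δ ^ 2 / 2 := by positivity
  have key := GaussianFourier.integral_cexp_neg_mul_sq_norm_add
    (b := ((Δ ^ 2 / 2 : ℝ) : ℂ)) (by rw [Complex.ofReal_re]; exact div_pos (pow_pos hΔ 2) two_pos) Complex.I u
  rw [integrand_eq, key]
  have h1 : (↑π / ((Δ ^ 2 / 2 : ℝ) : ℂ)) = ((2 * π / Δ ^ 2 : ℝ) : ℂ) := by
    push_cast
    rw [div_div_eq_mul_div]
    ring
  have h2 : ((Module.finrank ℝ (EuclideanSpace ℝ (Fin d)) : ℂ) / 2) = (((d : ℝ) / 2 : ℝ) : ℂ) := by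
    rw [finrank_euclideanSpace_fin]; push_cast; ring
  have h3 : ((2 * π / Δ ^ 2 : ℝ) : ℂ) ^ ((((d : ℝ) / 2 : ℝ)) : ℂ) =
      (((2 * π / Δ ^ 2) ^ ((d : ℝ) / 2) : ℝ) : ℂ) :=
    (Complex.ofReal_cpow (by positivity) _).symm
  have h4 : Complex.I ^ 2 * (‖u‖ : ℂ) ^ 2 / (4 * ((Δ ^ 2 / 2 : ℝ) : ℂ)) =
      ((-‖u‖ ^ 2 / (2 * Δ ^ 2) : ℝ) : ℂ) := by
    have : (Δ : ℂ) ≠ 0 := Complex.ofReal_ne_zero.mpr hΔ.ne'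
    rw [Complex.I_sq]
    push_cast
    field_simp
    ring
  rw [h1, h2, h3, h4, ← Complex.ofReal_exp, ← Complex.ofReal_mul, ← Complex.ofReal_mul,
    Complex.ofReal_inj, gaussDensity]
  exact const_eq d ‖u‖ hΔ

end helpers

lemma integrable_h {b : ℝ} (hb : 0 < b) :
    Integrable (fun z : EuclideanSpace ℝ (Fin d) => Real.exp (-b * ‖z‖ ^ 2)) := by
  have h := (GaussianFourier.integrable_cexp_neg_mul_sq_norm_add
    (b := (b : ℂ)) (by simpa using hb) 0 (0 : EuclideanSpace ℝ (Fin d))).norm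
  refine h.congr (Filter.Eventually.of_forall fun z => ?_)
  simp only [Complex.norm_exp]
  congr 1
  simp [← Complex.ofReal_pow]

lemma part1 (d : ℕ) {Δ : ℝ} (hΔ : 0 < Δ) (R : ℝ) {k₀ : ℕ}
    (y : Fin k₀ → EuclideanSpace ℝ (Fin d)) (w : Fin k₀ → ℝ)
    (hw : ∀ j, 0 ≤ w j) (hw1 : ∑ j, w j = 1) (x : EuclideanSpace ℝ (Fin d)) :
    ‖((∑ j : Fin k₀, w j * gaussDensity d Δ (x - y j) : ℝ) : ℂ) -
          ((2 * π : ℝ) ^ (-(d : ℝ)) : ℝ) * ∑ j : Fin k₀, (w j : ℂ) *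
            ∫ z in Metric.closedBall (0 : EuclideanSpace ℝ (Fin d)) R,
              (Real.exp (-Δ ^ 2 * ‖z‖ ^ 2 / 2) : ℂ) *
                Complex.exp ((⟪x - y j, z⟫ : ℝ) * Complex.I)‖ ≤
        (2 * π) ^ (-(d : ℝ)) *
          ∫ z in (Metric.closedBall (0 : EuclideanSpace ℝ (Fin d)) R)ᶜ,
            Real.exp (-Δ ^ 2 * ‖z‖ ^ 2 / 2) := by
  set B := Metric.closedBall (0 : EuclideanSpace ℝ (Fin d)) R with hB
  set c : ℝ := (2 * π) ^ (-(d : ℝ)) with hc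
  have hc0 : 0 ≤ c := Real.rpow_nonneg (by positivity) _
  set f : Fin k₀ → EuclideanSpace ℝ (Fin d) → ℂ := fun j z =>
    (Real.exp (-Δ ^ 2 * ‖z‖ ^ 2 / 2) : ℂ) * Complex.exp ((⟪x - y j, z⟫ : ℝ) * Complex.I)
    with hf
  set T : ℝ := ∫ z in Bᶜ, Real.exp (-Δ ^ 2 * ‖z‖ ^ 2 / 2) with hT
  have hT0 : 0 ≤ T := integral_nonneg fun z => (Real.exp_pos _).le
  have hsplit : ∀ j, (∫ z, f j z) = (∫ z in B, f j z) + ∫ z in Bᶜ, f j z := fun j =>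
    (integral_add_compl measurableSet_closedBall (integrable_f hΔ (x - y j))).symm
  have key : ((∑ j : Fin k₀, w j * gaussDensity d Δ (x - y j) : ℝ) : ℂ) -
      (c : ℂ) * ∑ j : Fin k₀, (w j : ℂ) * ∫ z in B, f j z =
      (c : ℂ) * ∑ j : Fin k₀, (w j : ℂ) * ∫ z in Bᶜ, f j z := by
    have h1 : ((∑ j : Fin k₀, w j * gaussDensity d Δ (x - y j) : ℝ) : ℂ) =
        ∑ j : Fin k₀, (w j : ℂ) * ((c : ℂ) * ((∫ z in B, f j z) + ∫ z in Bᶜ, f j z)) := by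
      push_cast
      refine Finset.sum_congr rfl fun j _ => ?_
      rw [gauss_eq hΔ (x - y j), hsplit j]
    rw [h1, Finset.mul_sum, Finset.mul_sum, ← Finset.sum_sub_distrib]
    exact Finset.sum_congr rfl fun j _ => by ring
  rw [key, norm_mul, Complex.norm_real, Real.norm_eq_abs, abs_of_nonneg hc0]
  have hIj : ∀ j, ‖∫ z in Bᶜ, f j z‖ ≤ T := by
    intro j
    refine le_trans (norm_integral_le_integral_norm _) (le_of_eq ?_)
    simp only [hf, norm_f, hT]
  have habs : ‖∑ j : Fin k₀, (w j : ℂ) * ∫ z in Bᶜ, f j z‖ ≤ T := by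
    refine le_trans (norm_sum_le _ _) ?_
    have : ∀ j ∈ Finset.univ, ‖(w j : ℂ) * ∫ z in Bᶜ, f j z‖ ≤ w j * T := by
      intro j _
      rw [norm_mul, Complex.norm_real, Real.norm_eq_abs, abs_of_nonneg (hw j)]
      exact mul_le_mul_of_nonneg_left (hIj j) (hw j)
    refine le_trans (Finset.sum_le_sum this) ?_
    rw [← Finset.sum_mul, hw1, one_mul]
  exact mul_le_mul_of_nonneg_left habs hc0

set_option maxHeartbeats 1000000 in
lemma part2 (d k : ℕ) (hd : 1 ≤ d) (hk : 2 ≤ k) {C Δ : ℝ} (hC : 0 < C) (hΔ : 0 < Δ) :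
    (2 * π) ^ (-(d : ℝ)) *
        (∫ z in (Metric.closedBall (0 : EuclideanSpace ℝ (Fin d))
            ((Real.sqrt (C * Real.log k) + Real.sqrt d) / Δ))ᶜ,
          Real.exp (-Δ ^ 2 * ‖z‖ ^ 2 / 2)) ≤
      (2 * π * Δ ^ 2) ^ (-(d : ℝ) / 2) * (k : ℝ) ^ (-C / 2) := by
  have hk1 : (1 : ℝ) < k := by exact_mod_cast hk.trans_lt' one_lt_two
  have hd0 : (0 : ℝ) < d := by exact_mod_cast hd
  set a : ℝ := C * Real.log k with ha_def
  have ha : 0 < a := mul_pos hC (Real.log_pos hk1)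
  set sa : ℝ := Real.sqrt a with hsa
  set sd : ℝ := Real.sqrt d with hsd
  have hsa0 : 0 < sa := Real.sqrt_pos.mpr ha
  have hsd0 : 0 < sd := Real.sqrt_pos.mpr hd0
  have hsa2 : sa ^ 2 = a := Real.sq_sqrt ha.le
  have hsd2 : sd ^ 2 = (d : ℝ) := Real.sq_sqrt hd0.le
  set R : ℝ := (sa + sd) / Δ with hR
  set s : ℝ := (sa + sd) ^ 2 with hs_def
  have hs : s = a + 2 * sa * sd + d := by rw [hs_def, add_sq, hsa2, hsd2]
  have hds : (d : ℝ) < s := by nlinarith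
  have hspos : 0 < s := hd0.trans hds
  set b : ℝ := (d : ℝ) * Δ ^ 2 / (2 * s) with hb_def
  have hb : 0 < b := div_pos (mul_pos hd0 (pow_pos hΔ 2)) (by positivity)
  have hbdef : b * (2 * s) = (d : ℝ) * Δ ^ 2 := by
    rw [hb_def]; field_simp
  set B := Metric.closedBall (0 : EuclideanSpace ℝ (Fin d)) R with hB
  -- pointwise bound on Bᶜ
  have hpt : ∀ z ∈ Bᶜ, Real.exp (-Δ ^ 2 * ‖z‖ ^ 2 / 2) ≤
      Real.exp (-(s - d) / 2) * Real.exp (-b * ‖z‖ ^ 2) := by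
    intro z hz
    have hz' : R < ‖z‖ := by
      simpa [hB, Metric.mem_closedBall, dist_zero_right, not_le] using hz
    have hR0 : 0 ≤ R := by positivity
    have hz2 : R ^ 2 ≤ ‖z‖ ^ 2 := by nlinarith [norm_nonneg z]
    have hR2 : R ^ 2 = s / Δ ^ 2 := by rw [hR, div_pow, hs_def]
    have h1 : s ≤ Δ ^ 2 * ‖z‖ ^ 2 := by
      rw [hR2] at hz2
      calc s = s / Δ ^ 2 * Δ ^ 2 := by field_simp
      _ ≤ ‖z‖ ^ 2 * Δ ^ 2 := by
          exact mul_le_mul_of_nonneg_right hz2 (sq_nonneg Δ)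
      _ = Δ ^ 2 * ‖z‖ ^ 2 := mul_comm _ _
    rw [← Real.exp_add, Real.exp_le_exp]
    have hprod : 0 ≤ (s - d) * (Δ ^ 2 * ‖z‖ ^ 2 - s) :=
      mul_nonneg (by linarith) (by linarith)
    nlinarith [hspos, hbdef, hprod]
  have hmeas : MeasurableSet Bᶜ := measurableSet_closedBall.compl
  have hint1 : (∫ z in Bᶜ, Real.exp (-Δ ^ 2 * ‖z‖ ^ 2 / 2)) ≤
      ∫ z in Bᶜ, Real.exp (-(s - d) / 2) * Real.exp (-b * ‖z‖ ^ 2) := by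
    refine setIntegral_mono_on (integrable_g hΔ).integrableOn
      (((integrable_h hb).const_mul _).integrableOn) hmeas hpt
  have hint2 : (∫ z in Bᶜ, Real.exp (-(s - d) / 2) * Real.exp (-b * ‖z‖ ^ 2)) ≤
      ∫ z : EuclideanSpace ℝ (Fin d), Real.exp (-(s - d) / 2) * Real.exp (-b * ‖z‖ ^ 2) := by
    refine setIntegral_le_integral ((integrable_h hb).const_mul _)
      (Filter.Eventually.of_forall fun z => ?_)
    positivity
  have hint3 : (∫ z : EuclideanSpace ℝ (Fin d), Real.exp (-(s - d) / 2) * Real.exp (-b * ‖z‖ ^ 2))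
      = Real.exp (-(s - d) / 2) * (π / b) ^ ((d : ℝ) / 2) := by
    rw [integral_const_mul, GaussianFourier.integral_rexp_neg_mul_sq_norm hb, finrank_euclideanSpace_fin]
  -- final scalar inequality
  have hfinal : (2 * π) ^ (-(d : ℝ)) * (Real.exp (-(s - d) / 2) * (π / b) ^ ((d : ℝ) / 2)) ≤
      (2 * π * Δ ^ 2) ^ (-(d : ℝ) / 2) * (k : ℝ) ^ (-C / 2) := by
    have h2π : (0 : ℝ) < 2 * π := by positivity
    have hπb : (0 : ℝ) < π / b := div_pos Real.pi_pos hb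
    have h2πΔ : (0 : ℝ) < 2 * π * Δ ^ 2 := by positivity
    have hk0 : (0 : ℝ) < k := by linarith
    have hlog1 : Real.log (π / b) =
        Real.log (2 * π) + Real.log s - Real.log d - 2 * Real.log Δ := by
      have : π / b = 2 * π * s / ((d : ℝ) * Δ ^ 2) := by
        rw [hb_def]; field_simp
      rw [this, Real.log_div (by positivity) (by positivity),
        Real.log_mul (by positivity) hspos.ne', Real.log_mul hd0.ne' (by positivity)]
      simp only [Real.log_pow]
      push_cast
      ring
    have hlog2 : Real.log (2 * π * Δ ^ 2) = Real.log (2 * π) + 2 * Real.log Δ := by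
      rw [Real.log_mul (by positivity) (by positivity)]
      simp only [Real.log_pow]
      push_cast
      ring
    have hloga : Real.log s - Real.log d ≤ 2 * (sa / sd) := by
      have h1 : Real.log s = 2 * Real.log (sa + sd) := by
        rw [hs_def, Real.log_pow]; push_cast; ring
      have h2 : Real.log d = 2 * Real.log sd := by
        rw [← hsd2, Real.log_pow]; push_cast; ring
      have h3 : Real.log (sa + sd) - Real.log sd = Real.log ((sa + sd) / sd) :=
        (Real.log_div (by positivity) hsd0.ne').symm
      have h4 : Real.log ((sa + sd) / sd) ≤ (sa + sd) / sd - 1 :=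
        Real.log_le_sub_one_of_pos (by positivity)
      have h5 : (sa + sd) / sd - 1 = sa / sd := by field_simp; ring
      rw [h1, h2]
      calc 2 * Real.log (sa + sd) - 2 * Real.log sd
          = 2 * (Real.log (sa + sd) - Real.log sd) := by ring
        _ = 2 * Real.log ((sa + sd) / sd) := by rw [h3]
        _ ≤ 2 * (sa / sd) := by linarith
    have hflog : (d : ℝ) * (Real.log s - Real.log d) ≤ 2 * sa * sd := by
      calc (d : ℝ) * (Real.log s - Real.log d) ≤ (d : ℝ) * (2 * (sa / sd)) :=
            mul_le_mul_of_nonneg_left hloga hd0.le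
        _ = 2 * sa * sd := by
            rw [← hsd2]; field_simp
    rw [Real.rpow_def_of_pos h2π, Real.rpow_def_of_pos hπb, Real.rpow_def_of_pos h2πΔ,
      Real.rpow_def_of_pos hk0]
    simp only [← Real.exp_add]
    rw [Real.exp_le_exp, hlog1, hlog2]
    have hs' : s = C * Real.log (k : ℝ) + 2 * sa * sd + d := by rw [hs, ha_def]
    linarith [hflog, hs']
  calc (2 * π) ^ (-(d : ℝ)) * (∫ z in Bᶜ, Real.exp (-Δ ^ 2 * ‖z‖ ^ 2 / 2))
      ≤ (2 * π) ^ (-(d : ℝ)) * (Real.exp (-(s - d) / 2) * (π / b) ^ ((d : ℝ) / 2)) := by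
        refine mul_le_mul_of_nonneg_left ?_ (Real.rpow_nonneg (by positivity) _)
        exact hint1.trans (hint2.trans_eq hint3)
    _ ≤ _ := hfinal


/-- For a discrete measure `ν = Σ_j w_j δ_{y_j}` and the Euclidean ball `B` of
radius `(√(C ln k)+√d)/Δ̄` centered at `0`, for every `x`:
`|(γ_{Δ̄} ⋆ ν)(x) − (2π)^(-d) Σ_j w_j ∫_B e^(-Δ̄²‖z‖²/2) e^(i⟨x−y_j,z⟩) dz|
  ≤ (2π)^(-d) ∫_{ℝ^d∖B} e^(-Δ̄²‖z‖²/2) dz ≤ (2πΔ̄²)^(-d/2)·k^(-C/2)`. -/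
theorem truncated_fourier_representation (d k k₀ : ℕ) (hd : 1 ≤ d) (hk : 2 ≤ k)
    (C : ℝ) (hC : 0 < C) (Δ : ℝ) (hΔ : 0 < Δ) (hΔ1 : Δ < 1)
    (y : Fin k₀ → EuclideanSpace ℝ (Fin d))
    (w : Fin k₀ → ℝ) (hw : ∀ j, 0 ≤ w j) (hw1 : ∑ j, w j = 1)
    (x : EuclideanSpace ℝ (Fin d)) :
    ‖((∑ j : Fin k₀, w j * gaussDensity d Δ (x - y j) : ℝ) : ℂ) -
          ((2 * π : ℝ) ^ (-(d : ℝ)) : ℝ) * ∑ j : Fin k₀, (w j : ℂ) *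
            ∫ z in Metric.closedBall (0 : EuclideanSpace ℝ (Fin d))
                ((Real.sqrt (C * Real.log k) + Real.sqrt d) / Δ),
              (Real.exp (-Δ ^ 2 * ‖z‖ ^ 2 / 2) : ℂ) *
                Complex.exp ((⟪x - y j, z⟫ : ℝ) * Complex.I)‖ ≤
        (2 * π) ^ (-(d : ℝ)) *
          ∫ z in (Metric.closedBall (0 : EuclideanSpace ℝ (Fin d))
              ((Real.sqrt (C * Real.log k) + Real.sqrt d) / Δ))ᶜ,
            Real.exp (-Δ ^ 2 * ‖z‖ ^ 2 / 2) ∧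
      (2 * π) ^ (-(d : ℝ)) *
          (∫ z in (Metric.closedBall (0 : EuclideanSpace ℝ (Fin d))
              ((Real.sqrt (C * Real.log k) + Real.sqrt d) / Δ))ᶜ,
            Real.exp (-Δ ^ 2 * ‖z‖ ^ 2 / 2)) ≤
        (2 * π * Δ ^ 2) ^ (-(d : ℝ) / 2) * (k : ℝ) ^ (-C / 2) :=
  ⟨part1 d hΔ _ y w hw hw1 x, part2 d k hd hk hC hΔ⟩
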